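/- Let f : [0,∞) → ℝ be a continuous, nondecreasing, nonnegative function and set F(s) = ∫₀^s f(t) dt. Then for every s ≥ 0 one has 2 ∫₀^s F(t) dt ≤ ( ∫₀^s √(f(t)) dt )². -/

import Mathlib

open MeasureTheory Set

/-- For `f : [0,∞) → ℝ` continuous, nondecreasing and nonnegative, with
`F(s) = ∫₀^s f(t) dt`, one has `2 ∫₀^s F(t) dt ≤ (∫₀^s √(f(t)) dt)²` for all `s ≥ 0`. -/
theorem two_int_F_le_sq_int_sqrt (f : ℝ → ℝ) (hfc : ContinuousOn f (Set.Ici 0))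
    (hfmono : ∀ s t : ℝ, 0 ≤ s → s ≤ t → f s ≤ f t)
    (hfnn : ∀ t : ℝ, 0 ≤ t → 0 ≤ f t)
    (s : ℝ) (hs : 0 ≤ s) :
    2 * ∫ t in (0:ℝ)..s, (∫ x in (0:ℝ)..t, f x) ≤
      (∫ t in (0:ℝ)..s, Real.sqrt (f t)) ^ 2 := by
  set g : ℝ → ℝ := fun x => Real.sqrt (f x) with hg
  have hgc : ContinuousOn g (Set.Ici 0) := Real.continuous_sqrt.comp_continuousOn hfc
  set A : ℝ → ℝ := fun t => ∫ x in (0:ℝ)..t, g x with hA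
  set F : ℝ → ℝ := fun t => ∫ x in (0:ℝ)..t, f x with hF
  set P : ℝ → ℝ := fun t => ∫ x in (0:ℝ)..t, F x with hP
  set H : ℝ → ℝ := fun t => (A t) ^ 2 - 2 * P t with hH
  -- integrability helpers
  have hfint : ∀ t : ℝ, 0 ≤ t → IntervalIntegrable f volume 0 t := fun t ht =>
    (hfc.mono (Icc_subset_Ici_self)).intervalIntegrable_of_Icc ht
  have hgint : ∀ t : ℝ, 0 ≤ t → IntervalIntegrable g volume 0 t := fun t ht =>
    (hgc.mono (Icc_subset_Ici_self)).intervalIntegrable_of_Icc ht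
  -- F is continuous on [0, s+1]
  have hFc : ContinuousOn F (Set.Icc 0 (s + 1)) := by
    have := intervalIntegral.continuousOn_primitive_interval
      (f := f) (a := 0) (b := s + 1) (μ := volume)
      (((hfc.mono (Icc_subset_Ici_self)).integrableOn_Icc).mono_set
        (by rw [uIcc_of_le (by linarith)]))
    rwa [uIcc_of_le (by linarith)] at this
  -- A continuous on [0,s]
  have hAc : ContinuousOn A (Set.Icc 0 s) := by
    have := intervalIntegral.continuousOn_primitive_interval
      (f := g) (a := 0) (b := s) (μ := volume)
      (((hgc.mono (Icc_subset_Ici_self)).integrableOn_Icc).mono_set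
        (by rw [uIcc_of_le hs]))
    rwa [uIcc_of_le hs] at this
  -- P continuous on [0,s]
  have hPc : ContinuousOn P (Set.Icc 0 s) := by
    have := intervalIntegral.continuousOn_primitive_interval
      (f := F) (a := 0) (b := s) (μ := volume)
      (((hFc.mono (Icc_subset_Icc le_rfl (by linarith))).integrableOn_Icc).mono_set
        (by rw [uIcc_of_le hs]))
    rwa [uIcc_of_le hs] at this
  have hHc : ContinuousOn H (Set.Icc 0 s) := ((hAc.pow 2).sub (continuousOn_const.mul hPc))
  -- derivative of H on the interior
  have key : MonotoneOn H (Set.Icc 0 s) := by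
    apply monotoneOn_of_hasDerivWithinAt_nonneg (convex_Icc 0 s) hHc
      (f' := fun t => 2 * A t ^ 1 * g t - 2 * F t)
    · intro t ht
      rw [interior_Icc] at ht
      obtain ⟨ht0, hts⟩ := ht
      have hnbhd : Set.Ici (0:ℝ) ∈ nhds t := Ici_mem_nhds ht0
      have hgat : ContinuousAt g t := hgc.continuousAt hnbhd
      have hgm : StronglyMeasurableAtFilter g (nhds t) :=
        ⟨Set.Ici 0, hnbhd, (hgc.mono Set.Subset.rfl).aestronglyMeasurable measurableSet_Ici⟩
      have hAderiv : HasDerivAt A (g t) t :=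
        intervalIntegral.integral_hasDerivAt_right (hgint t ht0.le) hgm hgat
      have hFat : ContinuousAt F t :=
        hFc.continuousAt (Icc_mem_nhds ht0 (by linarith))
      have hFm : StronglyMeasurableAtFilter F (nhds t) :=
        ⟨Set.Icc 0 (s+1), Icc_mem_nhds ht0 (by linarith),
          hFc.aestronglyMeasurable measurableSet_Icc⟩
      have hFint : IntervalIntegrable F volume 0 t :=
        (hFc.mono (Icc_subset_Icc le_rfl (by linarith))).intervalIntegrable_of_Icc ht0.le
      have hPderiv : HasDerivAt P (F t) t :=
        intervalIntegral.integral_hasDerivAt_right hFint hFm hFat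
      exact (((hAderiv.pow 2).sub (hPderiv.const_mul 2))).hasDerivWithinAt.mono
        interior_subset
    · intro t ht
      rw [interior_Icc] at ht
      obtain ⟨ht0, hts⟩ := ht
      -- need F t ≤ g t * A t
      have hmono : ∀ x ∈ Set.Icc (0:ℝ) t, f x ≤ g x * g t := by
        intro x hx
        have hfx : 0 ≤ f x := hfnn x hx.1
        have hle : f x ≤ f t := hfmono x t hx.1 hx.2
        calc f x = g x * g x := (Real.mul_self_sqrt hfx).symm
          _ ≤ g x * g t := by
              exact mul_le_mul_of_nonneg_left (Real.sqrt_le_sqrt hle) (Real.sqrt_nonneg _)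
      have hint2 : IntervalIntegrable (fun x => g x * g t) volume 0 t :=
        (hgint t ht0.le).mul_const _
      have hFle : F t ≤ ∫ x in (0:ℝ)..t, g x * g t :=
        intervalIntegral.integral_mono_on ht0.le (hfint t ht0.le) hint2 hmono
      rw [intervalIntegral.integral_mul_const] at hFle
      have : F t ≤ A t * g t := hFle
      nlinarith [this]
  have h0 : H 0 ≤ H s := key (Set.left_mem_Icc.2 hs) (Set.right_mem_Icc.2 hs) hs
  have hH0 : H 0 = 0 := by
    simp [hH, hA, hP, intervalIntegral.integral_same]
  rw [hH0] at h0
  have : 2 * P s ≤ A s ^ 2 := by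
    have := h0
    simp only [hH] at this
    linarith
  exact this
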